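/- arXiv:2101.03316 — 4 statements merged into one kernel-verified Lean document; each statement's English description precedes it below -/
import Mathlib

section
/- If (x, y, z) is a Markov triple with x ≤ y ≤ z and (x, y, z) ≠ (1, 1, 1), then 3xy < 2z, i.e. the Vieta flip 3xy − z is strictly smaller than z. -/
/-- If (x,y,z) is a Markov triple with x ≤ y ≤ z and (x,y,z) ≠ (1,1,1),
then 3xy < 2z, i.e. the Vieta flip 3xy − z is strictly smaller than z. -/
theorem stmt_1 (x y z : ℤ) (hx : 0 < x) (hy : 0 < y) (hz : 0 < z)
    (h : x ^ 2 + y ^ 2 + z ^ 2 = 3 * x * y * z)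
    (hxy : x ≤ y) (hyz : y ≤ z) (hne : (x, y, z) ≠ (1, 1, 1)) :
    3 * x * y < 2 * z := by
  by_contra hcon
  push_neg at hcon
  -- the other root z' = 3xy - z satisfies z' ≥ z ≥ y
  have h1 : (z - y) * (3 * x * y - z - y) ≥ 0 := by
    apply mul_nonneg <;> omega
  -- expand using the Markov equation: f(y) = x² + 2y² - 3xy² ≥ 0
  have h2 : x ^ 2 + 2 * y ^ 2 - 3 * x * y ^ 2 ≥ 0 := by nlinarith [h1]
  have hx1 : x = 1 := by nlinarith [sq_nonneg y, mul_pos hy hy]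
  subst hx1
  have hy1 : y = 1 := by nlinarith
  subst hy1
  have hz2 : z = 1 := by nlinarith
  exact hne (by simp [hz2])
end

section
/- Every Markov triple can be obtained from (1, 1, 1) by a finite sequence of coordinate permutations and Vieta flips (x, y, z) ↦ (x, y, 3xy − z). -/
/-- One step of the Markov moves: a coordinate permutation (generated by the
two adjacent transpositions) or the Vieta flip (x,y,z) ↦ (x,y,3xy−z). -/
def MarkovMove (t s : ℤ × ℤ × ℤ) : Prop :=
  s = (t.2.1, t.1, t.2.2) ∨
  s = (t.1, t.2.2, t.2.1) ∨
  s = (t.1, t.2.1, 3 * t.1 * t.2.1 - t.2.2)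

lemma move12 (x y z : ℤ) : MarkovMove (x, y, z) (y, x, z) := Or.inl rfl
lemma move23 (x y z : ℤ) : MarkovMove (x, y, z) (x, z, y) := Or.inr (Or.inl rfl)
lemma moveflip (x y z : ℤ) : MarkovMove (x, y, z) (x, y, 3 * x * y - z) :=
  Or.inr (Or.inr rfl)

lemma markov_symm : Symmetric MarkovMove := by
  rintro ⟨a, b, c⟩ ⟨d, e, f⟩ (h | h | h) <;>
    (injection h with h1 h2; injection h2 with h2 h3; subst h1; subst h2; subst h3)
  · exact Or.inl rfl
  · exact Or.inr (Or.inl rfl)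
  · refine Or.inr (Or.inr ?_)
    simp only
    congr 2
    ring

/-- sorted triples with max ≤ n reach (1,1,1). -/
lemma reach_one : ∀ (n : ℕ) (x y z : ℤ), 0 < x → 0 < y → 0 < z → x ≤ y → y ≤ z →
    x ^ 2 + y ^ 2 + z ^ 2 = 3 * x * y * z → z ≤ (n : ℤ) →
    Relation.ReflTransGen MarkovMove (x, y, z) (1, 1, 1) := by
  intro n
  induction n with
  | zero => intro x y z hx hy hz _ _ _ hn; exfalso; omega
  | succ n ih =>
    intro x y z hx hy hz hxy hyz h hn
    by_cases hxy1 : x = 1 ∧ y = 1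
    · obtain ⟨rfl, rfl⟩ := hxy1
      have hz12 : (z - 1) * (z - 2) = 0 := by linear_combination h
      rcases mul_eq_zero.1 hz12 with h1 | h2
      · have : z = 1 := by omega
        subst this; exact Relation.ReflTransGen.refl
      · have : z = 2 := by omega
        subst this
        have m : MarkovMove (1, 1, 2) (1, 1, 1) := by
          have := moveflip 1 1 2
          norm_num at this ⊢
          exact this
        exact Relation.ReflTransGen.single m
    · -- y ≥ 2
      have hy2 : 2 ≤ y := by
        rcases eq_or_lt_of_le (show (1:ℤ) ≤ x by omega) with h1 | h1
        · rcases eq_or_lt_of_le hxy with h2 | h2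
          · exfalso; exact hxy1 ⟨h1.symm, by omega⟩
          · omega
        · omega
      set w : ℤ := 3 * x * y - z with hw
      have hprod : z * w = x ^ 2 + y ^ 2 := by rw [hw]; linear_combination -h
      have hwpos : 0 < w := by
        rcases lt_trichotomy w 0 with h1 | h1 | h1
        · nlinarith
        · nlinarith
        · exact h1
      have hfneg : x ^ 2 + 2 * y ^ 2 - 3 * x * y ^ 2 < 0 := by
        nlinarith [mul_nonneg (sub_nonneg.2 hxy) (by positivity : (0:ℤ) ≤ y + x),
          mul_nonneg (by omega : (0:ℤ) ≤ x - 1) (sq_nonneg y)]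
      have hkey : (z - y) * (w - y) = x ^ 2 + 2 * y ^ 2 - 3 * x * y ^ 2 := by
        rw [hw]; linear_combination -h
      have hzy : y < z := by
        rcases eq_or_lt_of_le hyz with h1 | h1
        · exfalso; rw [← h1] at hkey; simp at hkey; omega
        · exact h1
      have hwy : w < y := by nlinarith
      have hw_eq : x ^ 2 + y ^ 2 + w ^ 2 = 3 * x * y * w := by
        rw [hw]; linear_combination h
      -- from (x,y,z) flip to (x,y,w), then swap to (x,w,y), sort and recurse
      refine Relation.ReflTransGen.head (moveflip x y z) ?_
      refine Relation.ReflTransGen.head (move23 x y (3 * x * y - z)) ?_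
      rw [← hw]
      rcases le_total x w with hxw | hxw
      · exact ih x w y hx hwpos hy hxw hwy.le (by linear_combination hw_eq) (by omega)
      · refine Relation.ReflTransGen.head (move12 x w y) ?_
        exact ih w x y hwpos hx hy hxw (by omega) (by linear_combination hw_eq) (by omega)

lemma reach_any (x y z : ℤ) (hx : 0 < x) (hy : 0 < y) (hz : 0 < z)
    (h : x ^ 2 + y ^ 2 + z ^ 2 = 3 * x * y * z) :
    Relation.ReflTransGen MarkovMove (x, y, z) (1, 1, 1) := by
  rcases le_total x y with hxy | hxy <;> rcases le_total y z with hyz | hyz <;>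
    rcases le_total x z with hxz | hxz
  · exact reach_one z.toNat x y z hx hy hz hxy hyz h (by omega)
  · exact reach_one z.toNat x y z hx hy hz hxy hyz h (by omega)
  · -- x ≤ y, z ≤ y, x ≤ z : target (x,z,y)
    refine Relation.ReflTransGen.head (move23 x y z) ?_
    exact reach_one y.toNat x z y hx hz hy hxz hyz (by linear_combination h) (by omega)
  · -- x ≤ y, z ≤ y, z ≤ x : target (z,x,y)
    refine Relation.ReflTransGen.head (move23 x y z) ?_
    refine Relation.ReflTransGen.head (move12 x z y) ?_
    exact reach_one y.toNat z x y hz hx hy hxz hxy (by linear_combination h) (by omega)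
  · -- y ≤ x, y ≤ z, x ≤ z : target (y,x,z)
    refine Relation.ReflTransGen.head (move12 x y z) ?_
    exact reach_one z.toNat y x z hy hx hz hxy hxz (by linear_combination h) (by omega)
  · -- y ≤ x, y ≤ z, z ≤ x : target (y,z,x)
    refine Relation.ReflTransGen.head (move12 x y z) ?_
    refine Relation.ReflTransGen.head (move23 y x z) ?_
    exact reach_one x.toNat y z x hy hz hx hyz hxz (by linear_combination h) (by omega)
  · -- z ≤ y ≤ x: target (z,y,x)
    refine Relation.ReflTransGen.head (move23 x y z) ?_
    refine Relation.ReflTransGen.head (move12 x z y) ?_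
    refine Relation.ReflTransGen.head (move23 z x y) ?_
    exact reach_one x.toNat z y x hz hy hx hyz hxy (by linear_combination h) (by omega)
  · -- z ≤ y ≤ x: target (z,y,x)
    refine Relation.ReflTransGen.head (move23 x y z) ?_
    refine Relation.ReflTransGen.head (move12 x z y) ?_
    refine Relation.ReflTransGen.head (move23 z x y) ?_
    exact reach_one x.toNat z y x hz hy hx hyz hxy (by linear_combination h) (by omega)

/-- Every Markov triple is obtained from (1,1,1) by a finite sequence of
coordinate permutations and Vieta flips. -/
theorem stmt_7 (x y z : ℤ) (hx : 0 < x) (hy : 0 < y) (hz : 0 < z)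
    (h : x ^ 2 + y ^ 2 + z ^ 2 = 3 * x * y * z) :
    Relation.ReflTransGen MarkovMove (1, 1, 1) (x, y, z) := by
  have hs : Symmetric (Relation.ReflTransGen MarkovMove) := fun a b =>
    @Std.Symm.symm _ _ (@Relation.ReflTransGen.symmetric _ MarkovMove ⟨markov_symm⟩) a b
  exact hs (reach_any x y z hx hy hz h)
end

section
/- For every R ≥ 3, the number of Markov triples (x, y, z) with max(x, y, z) ≤ R is finite, and in fact at most C·(log R)² for some absolute constant C. -/
inductive MNode : ℕ → ℕ → ℤ → ℤ → ℤ → Prop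
  | base : MNode 1 1 1 1 2
  | left {a b : ℕ} {x y z : ℤ} (h : MNode a b x y z) :
      MNode b (a + b) y z (3 * y * z - x)
  | right {a b : ℕ} {x y z : ℤ} (h : MNode a b x y z) :
      MNode a (a + b) x z (3 * x * z - y)

lemma MNode.labels {a b : ℕ} {x y z : ℤ} (h : MNode a b x y z) :
    1 ≤ a ∧ 1 ≤ b ∧ (a < b ∨ (a = 1 ∧ b = 1)) := by
  induction h with
  | base => omega
  | left h ih => omega
  | right h ih => omega

lemma MNode.inv {a b : ℕ} {x y z : ℤ} (h : MNode a b x y z) :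
    1 ≤ x ∧ x ≤ y ∧ y ≤ z ∧ x ^ 2 + y ^ 2 + z ^ 2 = 3 * x * y * z ∧
      (2 : ℤ) ^ a ≤ 2 * x ∧ (2 : ℤ) ^ b ≤ 2 * y ∧ (2 : ℤ) ^ (a + b) ≤ 2 * z := by
  induction h with
  | base => norm_num
  | @left a b x y z h ih =>
    obtain ⟨hx, hxy, hyz, hm, ha, hb, hab⟩ := ih
    refine ⟨by linarith, hyz, by nlinarith, by nlinarith, hb, hab, ?_⟩
    have hxyz : x ≤ y * z := by nlinarith
    calc (2:ℤ) ^ (b + (a + b)) = 2 ^ b * 2 ^ (a + b) := by rw [← pow_add]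
    _ ≤ (2 * y) * (2 * z) := by
        apply mul_le_mul hb hab (by positivity) (by linarith)
    _ ≤ 2 * (3 * y * z - x) := by nlinarith
  | @right a b x y z h ih =>
    obtain ⟨hx, hxy, hyz, hm, ha, hb, hab⟩ := ih
    refine ⟨hx, by linarith, by nlinarith, by nlinarith, ha, hab, ?_⟩
    have hxyz : y ≤ x * z := by nlinarith
    calc (2:ℤ) ^ (a + (a + b)) = 2 ^ a * 2 ^ (a + b) := by rw [← pow_add]
    _ ≤ (2 * x) * (2 * z) := by
        apply mul_le_mul ha hab (by positivity) (by linarith)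
    _ ≤ 2 * (3 * x * z - y) := by nlinarith

lemma MNode.cases' {a b : ℕ} {x y z : ℤ} (h : MNode a b x y z) :
    (a = 1 ∧ b = 1 ∧ x = 1 ∧ y = 1 ∧ z = 2) ∨
    (∃ a0 b0 : ℕ, ∃ x0 y0 z0 : ℤ, MNode a0 b0 x0 y0 z0 ∧ a = b0 ∧ b = a0 + b0 ∧
      x = y0 ∧ y = z0 ∧ z = 3 * y0 * z0 - x0) ∨
    (∃ a0 b0 : ℕ, ∃ x0 y0 z0 : ℤ, MNode a0 b0 x0 y0 z0 ∧ a = a0 ∧ b = a0 + b0 ∧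
      x = x0 ∧ y = z0 ∧ z = 3 * x0 * z0 - y0) := by
  cases h with
  | base => tauto
  | left h => exact Or.inr (Or.inl ⟨_, _, _, _, _, h, rfl, rfl, rfl, rfl, rfl⟩)
  | right h => exact Or.inr (Or.inr ⟨_, _, _, _, _, h, rfl, rfl, rfl, rfl, rfl⟩)

lemma MNode.one_one {x y z : ℤ} (h : MNode 1 1 x y z) : x = 1 ∧ y = 1 ∧ z = 2 := by
  rcases h.cases' with ⟨_, _, hx, hy, hz⟩ | ⟨a0, b0, x0, y0, z0, h0, ha, hb, _⟩ |
      ⟨a0, b0, x0, y0, z0, h0, ha, hb, _⟩ <;>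
    [exact ⟨hx, hy, hz⟩; skip; skip] <;> (have := h0.labels; omega)

theorem MNode.uniq {b a : ℕ} {x y z x' y' z' : ℤ} (h1 : MNode a b x y z)
    (h2 : MNode a b x' y' z') : x = x' ∧ y = y' ∧ z = z' := by
  rcases h1.cases' with ⟨ha, hb, hx, hy, hz⟩ |
      ⟨a0, b0, x0, y0, z0, h0, ha, hb, hx, hy, hz⟩ |
      ⟨a0, b0, x0, y0, z0, h0, ha, hb, hx, hy, hz⟩ <;>
  rcases h2.cases' with ⟨ha', hb', hx', hy', hz'⟩ |
      ⟨a1, b1, x1, y1, z1, h1', ha', hb', hx', hy', hz'⟩ |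
      ⟨a1, b1, x1, y1, z1, h1', ha', hb', hx', hy', hz'⟩
  · exact ⟨by omega, by omega, by omega⟩
  · have := h1'.labels; omega
  · have := h1'.labels; omega
  · have := h0.labels; omega
  · -- left / left
    have l0 := h0.labels
    have l1 := h1'.labels
    have e1 : a0 = a1 := by omega
    have e2 : b0 = b1 := by omega
    subst e1; subst e2
    obtain ⟨ex, ey, ez⟩ := MNode.uniq h0 h1'
    refine ⟨by omega, by omega, by rw [hz, hz', ex, ey, ez]⟩
  · -- left / right
    have l0 := h0.labels
    have l1 := h1'.labels
    have e : a0 = 1 ∧ b0 = 1 ∧ a1 = 1 ∧ b1 = 1 := by omega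
    obtain ⟨e1, e2, e3, e4⟩ := e
    subst e1; subst e2; subst e3; subst e4
    obtain ⟨u1, u2, u3⟩ := h0.one_one
    obtain ⟨v1, v2, v3⟩ := h1'.one_one
    subst u1; subst u2; subst u3; subst v1; subst v2; subst v3
    exact ⟨by omega, by omega, by omega⟩
  · have := h0.labels; omega
  · -- right / left
    have l0 := h0.labels
    have l1 := h1'.labels
    have e : a0 = 1 ∧ b0 = 1 ∧ a1 = 1 ∧ b1 = 1 := by omega
    obtain ⟨e1, e2, e3, e4⟩ := e
    subst e1; subst e2; subst e3; subst e4
    obtain ⟨u1, u2, u3⟩ := h0.one_one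
    obtain ⟨v1, v2, v3⟩ := h1'.one_one
    subst u1; subst u2; subst u3; subst v1; subst v2; subst v3
    exact ⟨by omega, by omega, by omega⟩
  · -- right / right
    have l0 := h0.labels
    have l1 := h1'.labels
    have e1 : a0 = a1 := by omega
    have e2 : b0 = b1 := by omega
    subst e1; subst e2
    obtain ⟨ex, ey, ez⟩ := MNode.uniq h0 h1'
    refine ⟨by omega, by omega, by rw [hz, hz', ex, ey, ez]⟩
termination_by b
decreasing_by all_goals omega

theorem MNode.surj (x y z : ℤ) (hx : 1 ≤ x) (hxy : x ≤ y) (hyz : y ≤ z) (hz : 2 ≤ z)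
    (hm : x ^ 2 + y ^ 2 + z ^ 2 = 3 * x * y * z) : ∃ a b : ℕ, MNode a b x y z := by
  by_cases hxey : x = y
  · -- x = y forces (1,1,2)
    subst hxey
    have hd : x ^ 2 ∣ z ^ 2 := ⟨3 * z - 2, by ring_nf; linarith [hm]⟩
    have hdz : x ∣ z := (Int.pow_dvd_pow_iff two_ne_zero).mp hd
    obtain ⟨k, hk⟩ := hdz
    have hk1 : 1 ≤ k := by nlinarith
    have h2 : k * (3 * x - k) = 2 := by nlinarith
    have hk2 : k ≤ 2 := Int.le_of_dvd two_pos ⟨3 * x - k, h2.symm⟩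
    interval_cases k
    · exfalso; nlinarith
    · have hx1 : x = 1 := by nlinarith
      have hz2 : z = 2 := by omega
      subst hx1; subst hz2
      exact ⟨1, 1, MNode.base⟩
  · have hxy' : x < y := lt_of_le_of_ne hxy hxey
    have hyz' : y < z := by
      rcases eq_or_lt_of_le hyz with h | h
      · exfalso; nlinarith [sq_nonneg (x - y)]
      · exact h
    set w : ℤ := 3 * x * y - z with hw
    have hwz : w * z = x ^ 2 + y ^ 2 := by rw [hw]; nlinarith
    have hw1 : 1 ≤ w := by nlinarith
    have hwy : w ≤ y := by nlinarith [mul_pos (lt_of_lt_of_le (by linarith : (0:ℤ) < y + 1) (by linarith : y + 1 ≤ z)) hw1]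
    have hy2 : 2 ≤ y := by omega
    have hpm : ∀ u v : ℤ, u * v = x * w → u + v = x + w →
        u ^ 2 + v ^ 2 + y ^ 2 = 3 * u * v * y := by
      intro u v h1 h2
      nlinarith [sq_nonneg (u + v)]
    rcases le_total w x with hcase | hcase
    · -- parent (w, x, y), left step
      have hpmk : w ^ 2 + x ^ 2 + y ^ 2 = 3 * w * x * y := by nlinarith
      obtain ⟨a, b, hnode⟩ := MNode.surj w x y hw1 hcase hxy (by omega) hpmk
      exact ⟨b, a + b, by
        have : (3 : ℤ) * x * y - w = z := by omega
        simpa [this] using hnode.left⟩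
    · -- parent (x, w, y), right step
      have hpmk : x ^ 2 + w ^ 2 + y ^ 2 = 3 * x * w * y := by nlinarith
      obtain ⟨a, b, hnode⟩ := MNode.surj x w y hx hcase hwy (by omega) hpmk
      exact ⟨a, a + b, by
        have : (3 : ℤ) * x * y - w = z := by omega
        simpa [this] using hnode.right⟩
termination_by z.toNat
decreasing_by all_goals (simp [Int.toNat_lt_toNat]; omega)

/-- For every R ≥ 3 the set of Markov triples with sup-norm at most R is
finite, of cardinality at most C·(log R)² for an absolute constant C. -/
theorem stmt_16 :
    ∃ C : ℝ, 0 < C ∧ ∀ R : ℝ, 3 ≤ R →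
      {t : ℤ × ℤ × ℤ | 0 < t.1 ∧ 0 < t.2.1 ∧ 0 < t.2.2 ∧
        t.1 ^ 2 + t.2.1 ^ 2 + t.2.2 ^ 2 = 3 * t.1 * t.2.1 * t.2.2 ∧
        (max (max t.1 t.2.1) t.2.2 : ℝ) ≤ R}.Finite ∧
      ({t : ℤ × ℤ × ℤ | 0 < t.1 ∧ 0 < t.2.1 ∧ 0 < t.2.2 ∧
        t.1 ^ 2 + t.2.1 ^ 2 + t.2.2 ^ 2 = 3 * t.1 * t.2.1 * t.2.2 ∧
        (max (max t.1 t.2.1) t.2.2 : ℝ) ≤ R}.ncard : ℝ) ≤ C * Real.log R ^ 2 := by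
  classical
  refine ⟨100, by norm_num, fun R hR => ?_⟩
  set M : Set (ℤ × ℤ × ℤ) := {t : ℤ × ℤ × ℤ | 0 < t.1 ∧ 0 < t.2.1 ∧ 0 < t.2.2 ∧
        t.1 ^ 2 + t.2.1 ^ 2 + t.2.2 ^ 2 = 3 * t.1 * t.2.1 * t.2.2 ∧
        (max (max t.1 t.2.1) t.2.2 : ℝ) ≤ R} with hM
  have hR0 : (0:ℝ) < R := by linarith
  -- every coordinate is in [1, ⌊R⌋]
  have hcoord : ∀ t ∈ M, t.1 ∈ Set.Icc 1 ⌊R⌋ ∧ t.2.1 ∈ Set.Icc 1 ⌊R⌋ ∧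
      t.2.2 ∈ Set.Icc 1 ⌊R⌋ := by
    rintro ⟨p, q, r⟩ ⟨hp, hq, hr, hm, hmax⟩
    dsimp only at hp hq hr hm hmax
    simp only [max_le_iff] at hmax
    obtain ⟨⟨hmp, hmq⟩, hmr⟩ := hmax
    have h1 : p ≤ ⌊R⌋ := Int.le_floor.mpr hmp
    have h2 : q ≤ ⌊R⌋ := Int.le_floor.mpr hmq
    have h3 : r ≤ ⌊R⌋ := Int.le_floor.mpr hmr
    simp only [Set.mem_Icc]
    omega
  -- finiteness
  have hfin : M.Finite := by
    apply Set.Finite.subset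
      (((Set.finite_Icc (1:ℤ) ⌊R⌋).prod ((Set.finite_Icc (1:ℤ) ⌊R⌋).prod
        (Set.finite_Icc (1:ℤ) ⌊R⌋))))
    rintro t ht
    obtain ⟨h1, h2, h3⟩ := hcoord t ht
    exact ⟨h1, h2, h3⟩
  refine ⟨hfin, ?_⟩
  -- sorted subset
  set Ss : Set (ℤ × ℤ × ℤ) := {t ∈ M | t.1 ≤ t.2.1 ∧ t.2.1 ≤ t.2.2} with hSs
  have hSsfin : Ss.Finite := hfin.subset (fun t ht => ht.1)
  -- six permutation maps
  set σb : ℤ × ℤ × ℤ → ℤ × ℤ × ℤ := fun t => (t.1, t.2.2, t.2.1) with hσb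
  set σc : ℤ × ℤ × ℤ → ℤ × ℤ × ℤ := fun t => (t.2.1, t.1, t.2.2) with hσc
  set σd : ℤ × ℤ × ℤ → ℤ × ℤ × ℤ := fun t => (t.2.1, t.2.2, t.1) with hσd
  set σe : ℤ × ℤ × ℤ → ℤ × ℤ × ℤ := fun t => (t.2.2, t.1, t.2.1) with hσe
  set σf : ℤ × ℤ × ℤ → ℤ × ℤ × ℤ := fun t => (t.2.2, t.2.1, t.1) with hσf
  have hinjb : Function.Injective σb := by
    rintro ⟨a1,a2,a3⟩ ⟨b1,b2,b3⟩ h; simp [hσb, Prod.ext_iff] at h ⊢; tauto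
  have hinjc : Function.Injective σc := by
    rintro ⟨a1,a2,a3⟩ ⟨b1,b2,b3⟩ h; simp [hσc, Prod.ext_iff] at h ⊢; tauto
  have hinjd : Function.Injective σd := by
    rintro ⟨a1,a2,a3⟩ ⟨b1,b2,b3⟩ h; simp [hσd, Prod.ext_iff] at h ⊢; tauto
  have hinje : Function.Injective σe := by
    rintro ⟨a1,a2,a3⟩ ⟨b1,b2,b3⟩ h; simp [hσe, Prod.ext_iff] at h ⊢; tauto
  have hinjf : Function.Injective σf := by
    rintro ⟨a1,a2,a3⟩ ⟨b1,b2,b3⟩ h; simp [hσf, Prod.ext_iff] at h ⊢; tauto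
  -- M covered by six images of Ss
  have hcover : M ⊆ Ss ∪ σb '' Ss ∪ σc '' Ss ∪ σd '' Ss ∪ σe '' Ss ∪ σf '' Ss := by
    rintro ⟨p, q, r⟩ ⟨hp, hq, hr, hm, hmax⟩
    dsimp only at hp hq hr hm hmax
    simp only [max_le_iff] at hmax
    obtain ⟨⟨hmp, hmq⟩, hmr⟩ := hmax
    rcases le_total p q with h1 | h1 <;> rcases le_total q r with h2 | h2 <;>
      rcases le_total p r with h3 | h3
    · exact Or.inl <| Or.inl <| Or.inl <| Or.inl <| Or.inl
        ⟨⟨hp, hq, hr, hm, by simp only [max_le_iff]; exact ⟨⟨hmp, hmq⟩, hmr⟩⟩, h1, h2⟩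
    · exact Or.inl <| Or.inl <| Or.inl <| Or.inl <| Or.inl
        ⟨⟨hp, hq, hr, hm, by simp only [max_le_iff]; exact ⟨⟨hmp, hmq⟩, hmr⟩⟩, h1, h2⟩
    · exact Or.inl <| Or.inl <| Or.inl <| Or.inl <| Or.inr ⟨(p, r, q),
        ⟨⟨hp, hr, hq, by linear_combination hm,
          by simp only [max_le_iff]; exact ⟨⟨hmp, hmr⟩, hmq⟩⟩, h3, h2⟩, rfl⟩
    · exact Or.inl <| Or.inl <| Or.inr ⟨(r, p, q),
        ⟨⟨hr, hp, hq, by linear_combination hm,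
          by simp only [max_le_iff]; exact ⟨⟨hmr, hmp⟩, hmq⟩⟩, h3, h1⟩, rfl⟩
    · exact Or.inl <| Or.inl <| Or.inl <| Or.inr ⟨(q, p, r),
        ⟨⟨hq, hp, hr, by linear_combination hm,
          by simp only [max_le_iff]; exact ⟨⟨hmq, hmp⟩, hmr⟩⟩, h1, h3⟩, rfl⟩
    · exact Or.inl <| Or.inr ⟨(q, r, p),
        ⟨⟨hq, hr, hp, by linear_combination hm,
          by simp only [max_le_iff]; exact ⟨⟨hmq, hmr⟩, hmp⟩⟩, h2, h3⟩, rfl⟩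
    · exact Or.inr ⟨(r, q, p),
        ⟨⟨hr, hq, hp, by linear_combination hm,
          by simp only [max_le_iff]; exact ⟨⟨hmr, hmq⟩, hmp⟩⟩, h2, h1⟩, rfl⟩
    · exact Or.inr ⟨(r, q, p),
        ⟨⟨hr, hq, hp, by linear_combination hm,
          by simp only [max_le_iff]; exact ⟨⟨hmr, hmq⟩, hmp⟩⟩, h2, h1⟩, rfl⟩
  have hcount1 : M.ncard ≤ 6 * Ss.ncard := by
    calc M.ncard ≤ (Ss ∪ σb '' Ss ∪ σc '' Ss ∪ σd '' Ss ∪ σe '' Ss ∪ σf '' Ss).ncard :=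
          Set.ncard_le_ncard hcover (by
            exact (((((hSsfin.union (hSsfin.image σb)).union (hSsfin.image σc)).union
              (hSsfin.image σd)).union (hSsfin.image σe)).union (hSsfin.image σf)))
    _ ≤ Ss.ncard + (σb '' Ss).ncard + (σc '' Ss).ncard + (σd '' Ss).ncard
          + (σe '' Ss).ncard + (σf '' Ss).ncard := by
          refine le_trans (Set.ncard_union_le _ _) ?_
          gcongr
          refine le_trans (Set.ncard_union_le _ _) ?_
          gcongr
          refine le_trans (Set.ncard_union_le _ _) ?_
          gcongr
          refine le_trans (Set.ncard_union_le _ _) ?_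
          gcongr
          exact Set.ncard_union_le _ _
    _ = 6 * Ss.ncard := by
          rw [Set.ncard_image_of_injective _ hinjb, Set.ncard_image_of_injective _ hinjc,
            Set.ncard_image_of_injective _ hinjd, Set.ncard_image_of_injective _ hinje,
            Set.ncard_image_of_injective _ hinjf]
          ring
  -- split off (1,1,1)
  set Ss2 : Set (ℤ × ℤ × ℤ) := {t ∈ Ss | 2 ≤ t.2.2} with hSs2
  have hsplit : Ss ⊆ insert ((1:ℤ),(1:ℤ),(1:ℤ)) Ss2 := by
    rintro ⟨p, q, r⟩ ⟨⟨hp, hq, hr, hm, hmax⟩, h1, h2⟩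
    dsimp only at hp hq hr h1 h2
    by_cases h : 2 ≤ r
    · exact Or.inr ⟨⟨⟨hp, hq, hr, hm, hmax⟩, h1, h2⟩, h⟩
    · left
      simp only [Prod.ext_iff]
      omega
  have hcount2 : Ss.ncard ≤ Ss2.ncard + 1 := by
    calc Ss.ncard ≤ (insert ((1:ℤ),(1:ℤ),(1:ℤ)) Ss2).ncard :=
        Set.ncard_le_ncard hsplit ((hSsfin.subset (fun t ht => ht.1)).insert _)
    _ ≤ Ss2.ncard + 1 := Set.ncard_insert_le _ _
  -- the label injection
  set n : ℕ := Nat.log 2 (2 * ⌊R⌋.toNat) with hn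
  have hmR : (3:ℤ) ≤ ⌊R⌋ := by
    have := Int.le_floor.mpr (show ((3:ℤ):ℝ) ≤ R by push_cast; linarith)
    omega
  have hTfin : ((Set.Icc 1 n ×ˢ Set.Icc 1 n) : Set (ℕ × ℕ)).Finite :=
    (Set.finite_Icc _ _).prod (Set.finite_Icc _ _)
  set fl : ℤ × ℤ × ℤ → ℕ × ℕ := fun t =>
    if h : ∃ p : ℕ × ℕ, MNode p.1 p.2 t.1 t.2.1 t.2.2 then h.choose else (1,1) with hfl
  have hnode : ∀ t ∈ Ss2, MNode (fl t).1 (fl t).2 t.1 t.2.1 t.2.2 := by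
    rintro ⟨p, q, r⟩ ⟨⟨⟨hp, hq, hr, hm, hmax⟩, h1, h2⟩, h3⟩
    dsimp only at hp hq hr hm h1 h2 h3 ⊢
    have hex : ∃ pr : ℕ × ℕ, MNode pr.1 pr.2 p q r := by
      obtain ⟨a, b, hab⟩ := MNode.surj p q r hp h1 h2 h3 hm
      exact ⟨(a, b), hab⟩
    simp only [hfl]
    rw [dif_pos hex]
    exact hex.choose_spec
  have hmaps : ∀ t ∈ Ss2, fl t ∈ ((Set.Icc 1 n ×ˢ Set.Icc 1 n) : Set (ℕ × ℕ)) := by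
    intro t ht
    have hnd := hnode t ht
    obtain ⟨_, _, _, _, _, _, hz⟩ := hnd.inv
    obtain ⟨ha1, hb1, _⟩ := hnd.labels
    have hzR : t.2.2 ≤ ⌊R⌋ := by
      have := hcoord t ht.1.1
      simp only [Set.mem_Icc] at this
      omega
    have hpow : (2:ℕ) ^ ((fl t).1 + (fl t).2) ≤ 2 * ⌊R⌋.toNat := by
      have h2 : (2:ℤ) ^ ((fl t).1 + (fl t).2) ≤ 2 * ⌊R⌋ := by
        calc (2:ℤ) ^ ((fl t).1 + (fl t).2) ≤ 2 * t.2.2 := hz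
        _ ≤ 2 * ⌊R⌋ := by omega
      have h3 : ((2:ℕ) ^ ((fl t).1 + (fl t).2) : ℤ) ≤ ((2 * ⌊R⌋.toNat : ℕ) : ℤ) := by
        push_cast
        rw [Int.toNat_of_nonneg (by omega)]
        exact_mod_cast h2
      exact_mod_cast h3
    have hab : (fl t).1 + (fl t).2 ≤ n := by
      rw [hn]
      refine (Nat.le_log_iff_pow_le one_lt_two ?_).mpr hpow
      omega
    constructor <;> simp only [Set.mem_Icc] <;> omega
  have hinj : Set.InjOn fl Ss2 := by
    rintro t ht t' ht' hft
    have h1 := hnode t ht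
    have h2 := hnode t' ht'
    rw [hft] at h1
    obtain ⟨e1, e2, e3⟩ := MNode.uniq h1 h2
    exact Prod.ext e1 (Prod.ext e2 e3)
  have hcount3 : Ss2.ncard ≤ n * n := by
    calc Ss2.ncard ≤ ((Set.Icc 1 n ×ˢ Set.Icc 1 n) : Set (ℕ × ℕ)).ncard :=
        Set.ncard_le_ncard_of_injOn fl hmaps hinj hTfin
    _ = n * n := by
        rw [show ((Set.Icc 1 n ×ˢ Set.Icc 1 n) : Set (ℕ × ℕ)) =
          ↑(Finset.Icc 1 n ×ˢ Finset.Icc 1 n) by simp [Finset.coe_product]]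
        rw [Set.ncard_coe_finset]; simp
  -- total bound
  have htot : M.ncard ≤ 6 * (n * n + 1) := by omega
  -- real estimate
  have hfloorR : ((⌊R⌋.toNat : ℝ)) ≤ R := by
    have h4 : (⌊R⌋.toNat : ℤ) = ⌊R⌋ := Int.toNat_of_nonneg (by omega)
    have h5 : ((⌊R⌋ : ℤ) : ℝ) ≤ R := Int.floor_le R
    calc ((⌊R⌋.toNat : ℝ)) = (((⌊R⌋.toNat : ℤ)) : ℝ) := by push_cast; ring
    _ = ((⌊R⌋ : ℤ) : ℝ) := by rw [h4]
    _ ≤ R := h5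
  have hpowR : ((2:ℝ)) ^ n ≤ 2 * R := by
    have h1 : (2:ℕ) ^ n ≤ 2 * ⌊R⌋.toNat := Nat.pow_log_le_self 2 (by omega)
    calc ((2:ℝ)) ^ n = (((2:ℕ) ^ n : ℕ) : ℝ) := by push_cast; ring
    _ ≤ ((2 * ⌊R⌋.toNat : ℕ) : ℝ) := by exact_mod_cast h1
    _ = 2 * ((⌊R⌋.toNat : ℕ) : ℝ) := by push_cast; ring
    _ ≤ 2 * R := by linarith
  have hlogR : 1 ≤ Real.log R := by
    rw [Real.le_log_iff_exp_le hR0]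
    have := Real.exp_one_lt_d9
    linarith
  have hlog2 : 0.6931471803 < Real.log 2 := Real.log_two_gt_d9
  have hlog2' : Real.log 2 < 0.6931471808 := Real.log_two_lt_d9
  have hnlog : (n : ℝ) * Real.log 2 ≤ Real.log 2 + Real.log R := by
    have h1 : Real.log ((2:ℝ) ^ n) ≤ Real.log (2 * R) :=
      Real.log_le_log (by positivity) hpowR
    rw [Real.log_pow, Real.log_mul (by norm_num) (by linarith)] at h1
    exact h1
  have hn3 : (n : ℝ) ≤ 3 * Real.log R := by nlinarith [(by positivity : (0:ℝ) ≤ (n:ℝ))]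
  calc (M.ncard : ℝ) ≤ ((6 * (n * n + 1) : ℕ) : ℝ) := by exact_mod_cast htot
  _ = 6 * ((n:ℝ) * (n:ℝ) + 1) := by push_cast; ring
  _ ≤ 100 * Real.log R ^ 2 := by
      have e1 : (n:ℝ) * (n:ℝ) ≤ (3 * Real.log R) * (3 * Real.log R) :=
        mul_le_mul hn3 hn3 (by positivity) (by positivity)
      have e2 : (1:ℝ) * 1 ≤ Real.log R * Real.log R :=
        mul_le_mul hlogR hlogR (by norm_num) (by linarith)
      nlinarith [e1, e2]
end

section
/- Let B ⊂ ℝ² be a compact convex set with nonempty interior that is symmetric under (x, y) ↦ (y, x), and let (q, p) be a boundary point of B with 0 ≤ p < q. Then for every i > 0, the point (q + i, p) does not belong to B. -/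
/-- Let B ⊂ ℝ² be a compact convex set containing a neighbourhood of 0 that is
symmetric under (x,y) ↦ (y,x), and let (q,p) be a boundary point of B with
0 ≤ p < q.  Then for every i > 0 the point (q+i, p) is not in B. -/
theorem stmt_19 (B : Set (ℝ × ℝ)) (hcomp : IsCompact B) (hconv : Convex ℝ B)
    (h0 : (0 : ℝ × ℝ) ∈ interior B)
    (hsym : ∀ v : ℝ × ℝ, v ∈ B → (v.2, v.1) ∈ B)
    (p q : ℝ) (hp : 0 ≤ p) (hpq : p < q) (hbd : (q, p) ∈ frontier B) :
    ∀ i : ℝ, 0 < i → (q + i, p) ∉ B := by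
  intro i hi hmem
  have hq : 0 < q := lt_of_le_of_lt hp hpq
  have hqp : 0 < q + p := by linarith
  have hd : 0 < q + i - p := by linarith
  have hden : 0 < q + p + i := by linarith
  set t : ℝ := (q + p) / (q + p + i) with ht
  set s : ℝ := ((q - p) * (q + p) + q * i) / ((q + p) * (q + i - p)) with hs
  have hs0 : 0 ≤ s := by
    apply div_nonneg
    · nlinarith
    · positivity
  have hs1 : s ≤ 1 := by
    rw [div_le_one (by positivity)]
    nlinarith
  have ht0 : 0 < t := by positivity
  have ht1 : t < 1 := by
    rw [div_lt_one hden]; linarith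
  have hz : s • ((q + i, p) : ℝ × ℝ) + (1 - s) • ((p, q + i) : ℝ × ℝ) ∈ B :=
    hconv hmem (hsym _ hmem) hs0 (by linarith) (by ring)
  have hint : (1 - t) • ((0 : ℝ × ℝ)) +
      t • (s • ((q + i, p) : ℝ × ℝ) + (1 - s) • ((p, q + i) : ℝ × ℝ)) ∈ interior B :=
    hconv.combo_interior_self_mem_interior h0 hz (by linarith) (le_of_lt ht0) (by ring)
  have heq : (1 - t) • ((0 : ℝ × ℝ)) +
      t • (s • ((q + i, p) : ℝ × ℝ) + (1 - s) • ((p, q + i) : ℝ × ℝ)) = (q, p) := by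
    have h1 : (q + p) ≠ 0 := ne_of_gt hqp
    have h2 : (q + i - p) ≠ 0 := ne_of_gt hd
    have h3 : (q + p + i) ≠ 0 := ne_of_gt hden
    apply Prod.ext <;>
      simp [ht, hs, Prod.smul_mk, Prod.ext_iff] <;>
      field_simp <;> ring
  rw [heq] at hint
  exact hbd.2 hint
end
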